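/- arXiv:2107.06874 — 3 statements merged into one kernel-verified Lean document; each statement's English description precedes it below -/
import Mathlib

section
/- For reals q > p ≥ 0, ∫_{0}^{+∞} (e^{-p x²} - e^{-q x²})/x² dx = √π (√q - √p). -/
open MeasureTheory Real Set

theorem key_ident (p q x : ℝ) (hx : 0 < x) :
    ∫ t in p..q, Real.exp (-t * x ^ 2) =
      (Real.exp (-p * x ^ 2) - Real.exp (-q * x ^ 2)) / x ^ 2 := by
  have hx2 : x ^ 2 ≠ 0 := by positivity
  have : ∀ t : ℝ, Real.exp (-t * x ^ 2) = Real.exp (-(x^2) * t) := by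
    intro t; ring_nf
  simp_rw [this]
  rw [intervalIntegral.integral_comp_mul_left (fun t => Real.exp t)
      (by simpa using hx2 : -(x^2) ≠ 0), integral_exp, smul_eq_mul]
  field_simp
  ring_nf

-- bounds on g
theorem g_nonneg (p q x : ℝ) (hpq : p ≤ q) :
    0 ≤ (Real.exp (-p * x ^ 2) - Real.exp (-q * x ^ 2)) / x ^ 2 := by
  apply div_nonneg _ (sq_nonneg x)
  have : -q * x ^ 2 ≤ -p * x ^ 2 := by nlinarith [sq_nonneg x]
  linarith [Real.exp_le_exp.mpr this]

theorem g_le (p q x : ℝ) (hp : 0 ≤ p) (hpq : p ≤ q) (hx : x ≠ 0) :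
    (Real.exp (-p * x ^ 2) - Real.exp (-q * x ^ 2)) / x ^ 2 ≤ q - p := by
  have hx2 : (0:ℝ) < x ^ 2 := by positivity
  rw [div_le_iff₀ hx2]
  have h1 : Real.exp (-p * x ^ 2) ≤ 1 := by
    apply Real.exp_le_one_iff.mpr; nlinarith
  have h2 : 1 - (q - p) * x ^ 2 ≤ Real.exp (-((q - p) * x ^ 2)) := by
    have := Real.add_one_le_exp (-((q - p) * x ^ 2)); linarith
  have h3 : Real.exp (-q * x ^ 2) = Real.exp (-p * x ^ 2) * Real.exp (-((q-p) * x ^ 2)) := by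
    rw [← Real.exp_add]; ring_nf
  have hE1 : Real.exp (-((q - p) * x ^ 2)) ≤ 1 := by
    apply Real.exp_le_one_iff.mpr; nlinarith
  nlinarith [mul_nonneg (sub_nonneg.2 h1) (sub_nonneg.2 hE1)]

theorem g_le' (p q x : ℝ) (hp : 0 ≤ p) :
    (Real.exp (-p * x ^ 2) - Real.exp (-q * x ^ 2)) / x ^ 2 ≤ 1 / x ^ 2 := by
  rcases eq_or_ne x 0 with h | h
  · simp [h]
  have hx2 : (0:ℝ) < x ^ 2 := by positivity
  gcongr
  have := Real.exp_pos (-q * x ^ 2)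
  have : Real.exp (-p * x ^ 2) ≤ 1 := Real.exp_le_one_iff.mpr (by nlinarith)
  nlinarith [Real.exp_pos (-q * x ^ 2)]

theorem g_integrable (p q : ℝ) (hp : 0 ≤ p) (hpq : p < q) :
    IntegrableOn (fun x => (Real.exp (-p * x ^ 2) - Real.exp (-q * x ^ 2)) / x ^ 2)
      (Ioi (0:ℝ)) := by
  have hmeas : Measurable fun x : ℝ => (Real.exp (-p * x ^ 2) - Real.exp (-q * x ^ 2)) / x ^ 2 := by
    fun_prop
  have h1 : IntegrableOn (fun x => (Real.exp (-p * x ^ 2) - Real.exp (-q * x ^ 2)) / x ^ 2)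
      (Ioc (0:ℝ) 1) := by
    apply Integrable.mono' (integrable_const (q - p)) hmeas.aestronglyMeasurable
    filter_upwards [ae_restrict_mem measurableSet_Ioc] with x hx
    rw [Real.norm_eq_abs, abs_of_nonneg (g_nonneg p q x hpq.le)]
    exact g_le p q x hp hpq.le (ne_of_gt hx.1)
  have h2 : IntegrableOn (fun x => (Real.exp (-p * x ^ 2) - Real.exp (-q * x ^ 2)) / x ^ 2)
      (Ioi (1:ℝ)) := by
    apply Integrable.mono' (g := fun x => x ^ (-2 : ℝ))
      (integrableOn_Ioi_rpow_of_lt (by norm_num) one_pos) hmeas.aestronglyMeasurable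
    filter_upwards [ae_restrict_mem measurableSet_Ioi] with x hx
    rw [Real.norm_eq_abs, abs_of_nonneg (g_nonneg p q x hpq.le)]
    have hx0 : 0 < x := lt_trans one_pos hx
    have heq : x ^ (-2 : ℝ) = 1 / x ^ 2 := by
      rw [Real.rpow_neg hx0.le, ← Real.rpow_natCast x 2, one_div]
      norm_num
    rw [heq]
    exact g_le' p q x hp
  rw [← Set.Ioc_union_Ioi_eq_Ioi (zero_le_one' ℝ)]
  exact h1.union h2

theorem gaussian_frullani (p q : ℝ) (hp : 0 ≤ p) (hpq : p < q) :
    ∫ x in Set.Ioi (0 : ℝ), (Real.exp (-p * x ^ 2) - Real.exp (-q * x ^ 2)) / x ^ 2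
      = Real.sqrt Real.pi * (Real.sqrt q - Real.sqrt p) := by
  have hInt := g_integrable p q hp hpq
  have step1 : ∫ x in Ioi (0:ℝ), (Real.exp (-p * x ^ 2) - Real.exp (-q * x ^ 2)) / x ^ 2
      = ∫ x in Ioi (0:ℝ), ∫ t in Ioc p q, Real.exp (-t * x ^ 2) := by
    apply setIntegral_congr_fun measurableSet_Ioi
    intro x hx
    show _ = ∫ t in Ioc p q, Real.exp (-t * x ^ 2)
    rw [← intervalIntegral.integral_of_le hpq.le, key_ident p q x hx]
  have hcont : Continuous (Function.uncurry fun (x t : ℝ) => Real.exp (-t * x ^ 2)) := by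
    fun_prop
  have hprod : Integrable (Function.uncurry fun (x t : ℝ) => Real.exp (-t * x ^ 2))
      ((volume.restrict (Ioi (0:ℝ))).prod (volume.restrict (Ioc p q))) := by
    rw [integrable_prod_iff hcont.aestronglyMeasurable]
    constructor
    · filter_upwards with x
      exact (Continuous.integrableOn_Ioc (by fun_prop))
    · apply hInt.congr
      filter_upwards [ae_restrict_mem measurableSet_Ioi] with x hx
      show _ = ∫ t in Ioc p q, ‖Real.exp (-t * x ^ 2)‖
      rw [← intervalIntegral.integral_of_le hpq.le]
      simp_rw [Real.norm_eq_abs, abs_of_nonneg (Real.exp_pos _).le]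
      exact (key_ident p q x hx).symm
  rw [step1, integral_integral_swap hprod]
  have step2 : ∫ t in Ioc p q, ∫ x in Ioi (0:ℝ), Real.exp (-t * x ^ 2)
      = ∫ t in Ioc p q, Real.sqrt Real.pi / 2 * t ^ (-(1:ℝ)/2) := by
    apply setIntegral_congr_fun measurableSet_Ioc
    intro t ht
    have ht0 : 0 < t := lt_of_le_of_lt hp ht.1
    show (∫ x in Ioi (0:ℝ), Real.exp (-t * x ^ 2)) = _
    rw [integral_gaussian_Ioi, Real.sqrt_div Real.pi_pos.le, Real.sqrt_eq_rpow t,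
      show (-(1:ℝ)/2) = -(1/2) by norm_num]
    show √π / t ^ (1/(2:ℝ)) / 2 = √π / 2 * t ^ (-(1/(2:ℝ)))
    rw [Real.rpow_neg ht0.le]
    have : (0:ℝ) < t ^ (1/(2:ℝ)) := Real.rpow_pos_of_pos ht0 _
    field_simp
  rw [step2, ← intervalIntegral.integral_of_le hpq.le,
    intervalIntegral.integral_const_mul, integral_rpow (Or.inl (by norm_num))]
  rw [Real.sqrt_eq_rpow q, Real.sqrt_eq_rpow p]
  norm_num
  ring
end

section
/- For c > 0, p > 0, and A an n×n symmetric positive definite real matrix, ∫_{ℝⁿ} e^{-(c⟨Ax,x⟩)^p} dx = (π/c)^{n/2} · (1/√(det A)) · Γ(n/(2p) + 1)/Γ(n/2 + 1). -/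
open MeasureTheory

set_option maxHeartbeats 2000000 in
theorem gaussian_integral_homogeneous (n : ℕ) (c p : ℝ) (hc : 0 < c) (hp : 0 < p)
    (A : Matrix (Fin n) (Fin n) ℝ) (hA : A.PosDef) :
    ∫ x : Fin n → ℝ, Real.exp (-(c * dotProduct (A.mulVec x) x) ^ p)
      = (Real.pi / c) ^ ((n : ℝ) / 2) * (1 / Real.sqrt A.det)
          * (Real.Gamma ((n : ℝ) / (2 * p) + 1) / Real.Gamma ((n : ℝ) / 2 + 1)) := by
  classical
  -- the positive definite matrix c • A and its square root M
  have hcA : (c • A).PosDef := by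
    refine Matrix.PosDef.of_dotProduct_mulVec_pos ?_ ?_
    · unfold Matrix.IsHermitian
      rw [Matrix.conjTranspose_smul]
      simp only [hA.1.eq]
      norm_num
    · intro x hx
      have := hA.dotProduct_mulVec_pos hx
      simp only [Matrix.smul_mulVec, dotProduct_smul, smul_eq_mul] at *
      simpa using mul_pos hc this
  set M : Matrix (Fin n) (Fin n) ℝ := open scoped MatrixOrder in CFC.sqrt (c • A) with hMdef
  have hMps : M.PosSemidef := open scoped MatrixOrder in Matrix.nonneg_iff_posSemidef.mp (CFC.sqrt_nonneg (c • A))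
  have hMM : M * M = c • A := open scoped MatrixOrder in CFC.sqrt_mul_sqrt_self (c • A) hcA.posSemidef.nonneg
  -- key quadratic identity
  have hquad : ∀ x : Fin n → ℝ,
      dotProduct (M.mulVec x) (M.mulVec x)
        = c * dotProduct (A.mulVec x) x := by
    intro x
    have hMsymm : M.transpose = M := by
      have := hMps.1
      simpa [Matrix.IsHermitian] using this
    have h1 : dotProduct (M.mulVec x) (M.mulVec x)
        = dotProduct x ((M * M).mulVec x) := by
      rw [Matrix.dotProduct_mulVec (M.mulVec x) M x, ← hMsymm,
        Matrix.vecMul_transpose, Matrix.mulVec_mulVec, hMsymm]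
      exact dotProduct_comm _ _

    rw [h1, hMM]
    simp [Matrix.smul_mulVec, dotProduct_comm, mul_comm]
  -- M is positive definite
  have hMpd : M.PosDef := by
    refine Matrix.PosDef.of_dotProduct_mulVec_pos hMps.1 fun x hx => ?_
    rcases lt_or_eq_of_le (hMps.dotProduct_mulVec_nonneg x) with h | h
    · exact h
    · exfalso
      have hMx : M.mulVec x = 0 := (hMps.dotProduct_mulVec_zero_iff x).mp h.symm
      have h0 : dotProduct (M.mulVec x) (M.mulVec x) = 0 := by
        rw [hMx]; simp
      rw [hquad x] at h0
      have := hA.dotProduct_mulVec_pos hx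
      rw [dotProduct_comm] at h0
      have hsx : dotProduct (star x) (A.mulVec x) = dotProduct x (A.mulVec x) := by
        simp
      rw [hsx] at this
      nlinarith
  have hdetM_pos : 0 < M.det := hMpd.det_pos
  have hdetA_pos : 0 < A.det := hA.det_pos
  have hdetM_sq : M.det ^ 2 = c ^ n * A.det := by
    have := congrArg Matrix.det hMM
    rw [Matrix.det_mul, Matrix.det_smul, Fintype.card_fin] at this
    rw [pow_two, this]
  -- the norm g
  set g : (Fin n → ℝ) → ℝ :=
    fun x => ‖(EuclideanSpace.equiv (Fin n) ℝ).symm (M.mulVec x)‖ with hgdef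
  have hg_eq : ∀ x, g x = Real.sqrt (c * dotProduct (A.mulVec x) x) := by
    intro x
    show ‖(EuclideanSpace.equiv (Fin n) ℝ).symm (M.mulVec x)‖ = _
    rw [← hquad x, EuclideanSpace.norm_eq]
    congr 1
    rw [dotProduct]
    congr 1
    ext i
    simp [Real.norm_eq_abs, sq_abs, pow_two]
  have hg0 : g 0 = 0 := by simp [hgdef, Matrix.mulVec_zero]
  have hgneg : ∀ x, g (-x) = g x := by
    intro x; simp [hgdef, Matrix.mulVec_neg]
  have hgadd : ∀ x y, g (x + y) ≤ g x + g y := by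
    intro x y
    simp only [hgdef, Matrix.mulVec_add, _root_.map_add]
    exact norm_add_le _ _
  have hg4 : ∀ {x : Fin n → ℝ}, g x = 0 → x = 0 := by
    intro x hx
    rw [hgdef] at hx
    have hMx : M.mulVec x = 0 := by
      have := norm_eq_zero.mp hx
      have h2 := congrArg (EuclideanSpace.equiv (Fin n) ℝ) this
      simpa using h2
    by_contra hxne
    have := hMpd.dotProduct_mulVec_pos hxne
    have hz : dotProduct (star x) (M.mulVec x) = 0 := by rw [hMx]; simp
    rw [hz] at this
    simp at this
  have hg5 : ∀ (r : ℝ) (x : Fin n → ℝ), g (r • x) ≤ |r| * g x := by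
    intro r x
    simp only [hgdef, Matrix.mulVec_smul, _root_.map_smul, norm_smul, Real.norm_eq_abs]
    exact le_refl _
  have hdot : ∀ v : Fin n → ℝ, 0 ≤ dotProduct v v :=
    fun v => Finset.sum_nonneg fun i _ => mul_self_nonneg _
  have h2p : (0 : ℝ) < 2 * p := by positivity
  -- apply the key lemma twice
  have key1 := MeasureTheory.measure_lt_one_eq_integral_div_gamma
    (volume : Measure (Fin n → ℝ)) hg0 hgneg hgadd (fun hx => hg4 hx) hg5 h2p
  have key2 := MeasureTheory.measure_lt_one_eq_integral_div_gamma
    (volume : Measure (Fin n → ℝ)) hg0 hgneg hgadd (fun hx => hg4 hx) hg5 two_pos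
  rw [Module.finrank_fintype_fun_eq_card, Fintype.card_fin] at key1 key2
  set I : ℝ := ∫ x : Fin n → ℝ, Real.exp (-g x ^ (2 * p)) with hIdef
  set J : ℝ := ∫ x : Fin n → ℝ, Real.exp (-g x ^ (2 : ℝ)) with hJdef
  have hInonneg : 0 ≤ I := integral_nonneg fun x => (Real.exp_pos _).le
  have hJnonneg : 0 ≤ J := integral_nonneg fun x => (Real.exp_pos _).le
  have hG1 : 0 < Real.Gamma ((n : ℝ) / (2 * p) + 1) :=
    Real.Gamma_pos_of_pos (by positivity)
  have hG2 : 0 < Real.Gamma ((n : ℝ) / 2 + 1) :=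
    Real.Gamma_pos_of_pos (by positivity)
  have hIJ : I / Real.Gamma ((n : ℝ) / (2 * p) + 1)
      = J / Real.Gamma ((n : ℝ) / 2 + 1) := by
    have := key1.symm.trans key2
    rw [ENNReal.ofReal_eq_ofReal_iff (by positivity) (by positivity)] at this
    exact this
  -- the integral in the statement equals I
  have hI_eq : (∫ x : Fin n → ℝ, Real.exp (-(c * dotProduct (A.mulVec x) x) ^ p)) = I := by
    rw [hIdef]
    congr 1
    funext x
    congr 2
    have ht : (0 : ℝ) ≤ c * dotProduct (A.mulVec x) x := by
      rw [← hquad x]; exact hdot _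
    rw [hg_eq x, Real.sqrt_eq_rpow, ← Real.rpow_mul ht]
    congr 1
    ring
  -- compute J : the Gaussian integral
  have hdet_ne : M.det ≠ 0 := ne_of_gt hdetM_pos
  have hJ_eq : J = (M.det)⁻¹ * Real.sqrt Real.pi ^ n := by
    have hJ1 : J = ∫ x : Fin n → ℝ,
        Real.exp (-(dotProduct (Matrix.toLin' M x) (Matrix.toLin' M x))) := by
      rw [hJdef]
      congr 1
      funext x
      congr 2
      rw [hg_eq x, ← hquad x, Real.rpow_two, Real.sq_sqrt (hdot _), Matrix.toLin'_apply]
    have hcont : Continuous fun y : Fin n → ℝ => Real.exp (-(dotProduct y y)) := by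
      apply Real.continuous_exp.comp
      apply Continuous.neg
      unfold dotProduct
      exact continuous_finset_sum _ fun i _ =>
        ((continuous_apply i).mul (continuous_apply i))
    have hmeas : Measurable (Matrix.toLin' M) :=
      (Matrix.toLin' M).continuous_of_finiteDimensional.measurable
    have hmap := Real.map_matrix_volume_pi_eq_smul_volume_pi (ι := Fin n) hdet_ne
    have hJ2 : J = ∫ y : Fin n → ℝ, Real.exp (-(dotProduct y y))
        ∂(Measure.map (Matrix.toLin' M) volume) := by
      rw [hJ1, MeasureTheory.integral_map hmeas.aemeasurable
        hcont.aestronglyMeasurable]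
    rw [hJ2, hmap, MeasureTheory.integral_smul_measure,
      ENNReal.toReal_ofReal (by positivity), smul_eq_mul,
      abs_of_pos (inv_pos.mpr hdetM_pos)]
    congr 1
    have : ∀ y : Fin n → ℝ, Real.exp (-(dotProduct y y))
        = ∏ i, Real.exp (-(y i * y i)) := by
      intro y
      rw [← Real.exp_sum]
      congr 1
      rw [dotProduct, ← Finset.sum_neg_distrib]
    calc ∫ y : Fin n → ℝ, Real.exp (-(dotProduct y y))
        = ∫ y : Fin n → ℝ, ∏ i, Real.exp (-(y i * y i)) := by
          congr 1; funext y; exact this y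
      _ = (∫ t : ℝ, Real.exp (-(t * t))) ^ n := by
          have h := MeasureTheory.integral_fintype_prod_eq_pow (ι := Fin n)
            (fun t : ℝ => Real.exp (-(t * t))) (μ := volume)
          rw [Fintype.card_fin] at h
          exact h
      _ = Real.sqrt Real.pi ^ n := by
          congr 1
          have := integral_gaussian 1
          simp only [one_mul, neg_mul, div_one] at this
          rw [← this]
          congr 1
          funext t
          rw [pow_two]
  -- wrap up the arithmetic
  have hdetM_eq : M.det = Real.sqrt c ^ n * Real.sqrt A.det := by
    have h1 : (Real.sqrt c ^ n * Real.sqrt A.det) ^ 2 = c ^ n * A.det := by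
      rw [mul_pow, ← pow_mul, mul_comm n 2, pow_mul, Real.sq_sqrt hc.le,
        Real.sq_sqrt hdetA_pos.le]
    have h2 : (0 : ℝ) ≤ Real.sqrt c ^ n * Real.sqrt A.det := by positivity
    nlinarith [hdetM_pos.le, hdetM_sq]
  have hpic : (Real.pi / c) ^ ((n : ℝ) / 2)
      = Real.sqrt Real.pi ^ n / Real.sqrt c ^ n := by
    have hpc : (0 : ℝ) ≤ Real.pi / c := by positivity
    rw [show ((n : ℝ) / 2) = (1 / 2) * (n : ℕ) by push_cast; ring,
      Real.rpow_mul hpc, ← Real.sqrt_eq_rpow, Real.rpow_natCast,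
      Real.sqrt_div Real.pi_pos.le, div_pow]
  have hsqc_pos : (0 : ℝ) < Real.sqrt c := Real.sqrt_pos.mpr hc
  have hsqA_pos : (0 : ℝ) < Real.sqrt A.det := Real.sqrt_pos.mpr hdetA_pos
  rw [hI_eq]
  have hIval : I = J * (Real.Gamma ((n : ℝ) / (2 * p) + 1)
      / Real.Gamma ((n : ℝ) / 2 + 1)) := by
    field_simp at hIJ ⊢
    linarith [hIJ]
  rw [hIval, hJ_eq, hdetM_eq, hpic]
  field_simp
end

section
/- For positive reals a, b and points A, B, C ∈ ℝ³, let p = a+b, P = (aA + bB)/p, S = ‖A-B‖², and F₀(x) = ∫₀¹ e^{-x t²} dt. Then ∫_{ℝ³} e^{-a‖r-A‖²} e^{-b‖r-B‖²} / ‖r-C‖ dr = (2π/p) · e^{-(ab/p) S} · F₀(p ‖C-P‖²). -/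
open MeasureTheory Real Set

lemma key_ident_s19 {F : Type*} [NormedAddCommGroup F] [InnerProductSpace ℝ F]
    (a b : ℝ) (hab : a + b ≠ 0) (x y : F) :
    a * ‖x‖^2 + b * ‖y‖^2
      = (a+b) * ‖(a+b)⁻¹ • (a • x + b • y)‖^2 + (a*b/(a+b)) * ‖y - x‖^2 := by
  have h1 : ‖a • x + b • y‖^2 = a^2*‖x‖^2 + 2*(a*b*(inner ℝ x y)) + b^2*‖y‖^2 := by
    rw [norm_add_sq_real, real_inner_smul_left, real_inner_smul_right, norm_smul, norm_smul]
    simp only [Real.norm_eq_abs, mul_pow, sq_abs]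
    ring
  have h2 : ‖y - x‖^2 = ‖y‖^2 - 2*(inner ℝ x y) + ‖x‖^2 := by
    rw [norm_sub_sq_real, real_inner_comm]
  rw [norm_smul, mul_pow, h1, h2]
  have h3 : ‖(a+b)⁻¹‖^2 = ((a+b)^2)⁻¹ := by
    rw [norm_inv, Real.norm_eq_abs, inv_pow, sq_abs]
  rw [h3]
  field_simp
  ring

lemma gauss_integrable {c : ℝ} (hc : 0 < c) :
    Integrable (fun v : EuclideanSpace ℝ (Fin 3) => Real.exp (-c * ‖v‖^2)) := by
  have h := GaussianFourier.integrable_cexp_neg_mul_sq_norm_add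
    (V := EuclideanSpace ℝ (Fin 3)) (b := (c:ℂ)) (by simpa using hc) 0 (0 : EuclideanSpace ℝ (Fin 3))
  have h2 := h.re
  refine h2.congr (Filter.Eventually.of_forall fun v => ?_)
  simp only [zero_mul, add_zero]
  rw [RCLike.re_to_complex, show (-(c:ℂ) * (‖v‖:ℂ)^2) = ((-c * ‖v‖^2 : ℝ) : ℂ) by push_cast; ring,
    Complex.exp_ofReal_re]

lemma g_hasDeriv {p : ℝ} (hp : 0 < p) (u : ℝ) :
    HasDerivAt (fun u : ℝ => u / Real.sqrt (p + u^2))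
      (p / ((p + u^2) * Real.sqrt (p + u^2))) u := by
  have h0 : 0 < p + u^2 := by positivity
  have hs0 : 0 < Real.sqrt (p + u^2) := Real.sqrt_pos.2 h0
  have hin : HasDerivAt (fun u : ℝ => p + u^2) (2*u) u := by
    simpa using ((hasDerivAt_pow 2 u).const_add p)
  have hs : HasDerivAt (fun u : ℝ => Real.sqrt (p + u^2))
      (1 / (2 * Real.sqrt (p + u^2)) * (2*u)) u :=
    (Real.hasDerivAt_sqrt h0.ne').comp u hin
  have := (hasDerivAt_id u).div hs hs0.ne'
  refine HasDerivAt.congr_deriv (f := fun u : ℝ => u / Real.sqrt (p + u^2)) this (Eq.symm ?_)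
  have hsq : Real.sqrt (p + u^2) ^ 2 = p + u^2 := Real.sq_sqrt h0.le
  simp only [id]
  rw [hsq]
  field_simp
  linear_combination -hsq

lemma g_strictMono {p : ℝ} (hp : 0 < p) :
    StrictMono (fun u : ℝ => u / Real.sqrt (p + u^2)) := by
  apply strictMono_of_deriv_pos
  intro x
  rw [(g_hasDeriv hp x).deriv]
  have h0 : 0 < p + x^2 := by positivity
  positivity

lemma g_image {p : ℝ} (hp : 0 < p) :
    (fun u : ℝ => u / Real.sqrt (p + u^2)) '' (Ioi 0) = Ioo 0 1 := by
  ext t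
  constructor
  · rintro ⟨u, hu, rfl⟩
    have hu : (0:ℝ) < u := hu
    have h0 : 0 < p + u^2 := by positivity
    have hs0 : 0 < Real.sqrt (p + u^2) := Real.sqrt_pos.2 h0
    refine ⟨div_pos hu hs0, ?_⟩
    rw [div_lt_one hs0]
    exact Real.lt_sqrt_of_sq_lt (by linarith)
  · rintro ⟨ht0, ht1⟩
    have h1t : 0 < 1 - t^2 := by nlinarith
    set s := Real.sqrt (1 - t^2) with hs
    have hs0 : 0 < s := Real.sqrt_pos.2 h1t
    have hs2 : s^2 = 1 - t^2 := Real.sq_sqrt h1t.le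
    have hsp : Real.sqrt p > 0 := Real.sqrt_pos.2 hp
    have hsp2 : Real.sqrt p ^ 2 = p := Real.sq_sqrt hp.le
    refine ⟨Real.sqrt p * t / s, mem_Ioi.2 (by positivity), ?_⟩
    have hval : p + (Real.sqrt p * t / s)^2 = (Real.sqrt p / s)^2 := by
      field_simp
      nlinarith [hs2, hsp2]
    simp only [hval]
    rw [Real.sqrt_sq (by positivity)]
    field_simp

lemma H_eq {p R2 : ℝ} (hp : 0 < p) (u : ℝ) :
    (2/Real.sqrt π) * (π/(p+u^2))^((3:ℝ)/2) * Real.exp (-(p*u^2/(p+u^2))*R2)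
      = |p/((p+u^2)*Real.sqrt (p+u^2))| •
        ((2*π/p) * Real.exp (-(p*R2)*(u/Real.sqrt (p+u^2))^2)) := by
  have h0 : 0 < p + u^2 := by positivity
  have hs0 : 0 < Real.sqrt (p+u^2) := Real.sqrt_pos.2 h0
  have hsq : Real.sqrt (p+u^2)^2 = p+u^2 := Real.sq_sqrt h0.le
  have hπ : Real.sqrt π ^ 2 = π := Real.sq_sqrt pi_pos.le
  have hπ0 : 0 < Real.sqrt π := Real.sqrt_pos.2 pi_pos
  have hexp : -(p*u^2/(p+u^2))*R2 = -(p*R2)*(u/Real.sqrt (p+u^2))^2 := by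
    rw [div_pow, hsq]; ring
  rw [hexp, smul_eq_mul, abs_of_pos (by positivity)]
  have hrpow : (π/(p+u^2))^((3:ℝ)/2)
      = (π * Real.sqrt π)/((p+u^2) * Real.sqrt (p+u^2)) := by
    rw [show ((3:ℝ)/2) = 1 + 1/2 by norm_num, Real.rpow_add (by positivity), Real.rpow_one,
      ← Real.sqrt_eq_rpow, Real.sqrt_div pi_pos.le]
    field_simp
  rw [hrpow]
  field_simp
open MeasureTheory Real Set

lemma coulomb_gaussian {p : ℝ} (hp : 0 < p) (w : EuclideanSpace ℝ (Fin 3)) :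
    ∫ r : EuclideanSpace ℝ (Fin 3), Real.exp (-p * ‖r - w‖^2) / ‖r‖
      = (2 * π / p) * ∫ t in (0:ℝ)..1, Real.exp (-(p * ‖w‖^2) * t^2) := by
  have hc1 : Continuous fun r : EuclideanSpace ℝ (Fin 3) => Real.exp (-p*‖r-w‖^2) :=
    Real.continuous_exp.comp (continuous_const.mul (((continuous_id.sub continuous_const).norm).pow 2))
  have hmeas : Measurable fun r : EuclideanSpace ℝ (Fin 3) => Real.exp (-p*‖r-w‖^2)/‖r‖ :=
    hc1.measurable.div continuous_norm.measurable
  have hnn : 0 ≤ᵐ[volume] fun r : EuclideanSpace ℝ (Fin 3) => Real.exp (-p*‖r-w‖^2)/‖r‖ :=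
    Filter.Eventually.of_forall fun r => by positivity
  rw [integral_eq_lintegral_of_nonneg_ae hnn hmeas.aestronglyMeasurable]
  -- step B : pointwise Gaussian representation of 1/‖r‖
  have hae : ∀ᵐ r : EuclideanSpace ℝ (Fin 3), r ≠ 0 := by
    have h0 : (volume : Measure (EuclideanSpace ℝ (Fin 3))) {0} = 0 := measure_singleton 0
    rw [ae_iff]
    simp only [ne_eq, not_not, setOf_eq_eq_singleton]
    exact h0
  have hB : ∫⁻ r : EuclideanSpace ℝ (Fin 3), ENNReal.ofReal (Real.exp (-p*‖r-w‖^2)/‖r‖)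
      = ∫⁻ r : EuclideanSpace ℝ (Fin 3), ∫⁻ u in Ioi (0:ℝ),
          ENNReal.ofReal ((2/Real.sqrt π) * Real.exp (-(p*‖r-w‖^2 + ‖r‖^2*u^2))) := by
    refine lintegral_congr_ae (hae.mono fun r hr => ?_)
    dsimp only
    have hr0 : 0 < ‖r‖ := norm_pos_iff.2 hr
    have heq : (fun u : ℝ => ENNReal.ofReal ((2/Real.sqrt π) * Real.exp (-(p*‖r-w‖^2 + ‖r‖^2*u^2))))
        = fun u : ℝ => ENNReal.ofReal (((2/Real.sqrt π) * Real.exp (-p*‖r-w‖^2)) * Real.exp (-(‖r‖^2) * u^2)) := by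
      funext u; congr 1; rw [neg_add, Real.exp_add]; ring
    rw [heq]
    have hint : IntegrableOn
        (fun u : ℝ => ((2/Real.sqrt π) * Real.exp (-p*‖r-w‖^2)) * Real.exp (-(‖r‖^2) * u^2)) (Ioi 0) :=
      (integrableOn_Ioi_exp_neg_mul_sq_iff.mpr (by positivity)).const_mul _
    rw [← ofReal_integral_eq_lintegral_ofReal hint (Filter.Eventually.of_forall fun u => by positivity)]
    rw [integral_const_mul, integral_gaussian_Ioi, Real.sqrt_div pi_pos.le,
      Real.sqrt_sq (norm_nonneg r)]
    congr 1
    have hπ0 : (0:ℝ) < Real.sqrt π := Real.sqrt_pos.2 pi_pos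
    field_simp
  rw [hB]
  -- step C : Tonelli
  have hcont : Continuous fun q : (EuclideanSpace ℝ (Fin 3)) × ℝ =>
      (2/Real.sqrt π) * Real.exp (-(p*‖q.1-w‖^2 + ‖q.1‖^2*q.2^2)) :=
    continuous_const.mul (Real.continuous_exp.comp
      ((((continuous_const.mul ((continuous_fst.sub continuous_const).norm.pow 2))).add
        ((continuous_fst.norm.pow 2).mul (continuous_snd.pow 2))).neg))
  have hmeasq : AEMeasurable (Function.uncurry fun (r : EuclideanSpace ℝ (Fin 3)) (u : ℝ) =>
      ENNReal.ofReal ((2/Real.sqrt π) * Real.exp (-(p*‖r-w‖^2 + ‖r‖^2*u^2))))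
      (volume.prod (volume.restrict (Ioi 0))) := by
    exact ((ENNReal.continuous_ofReal.comp hcont).measurable).aemeasurable
  rw [lintegral_lintegral_swap hmeasq]
  -- step D : inner Gaussian integral
  have hD : ∀ u : ℝ, (∫⁻ r : EuclideanSpace ℝ (Fin 3),
        ENNReal.ofReal ((2/Real.sqrt π) * Real.exp (-(p*‖r-w‖^2 + ‖r‖^2*u^2))))
      = ENNReal.ofReal ((2/Real.sqrt π) * (π/(p+u^2))^((3:ℝ)/2)
          * Real.exp (-(p*u^2/(p+u^2))*‖w‖^2)) := by
    intro u
    have h0 : 0 < p + u^2 := by positivity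
    set q : EuclideanSpace ℝ (Fin 3) := (p+u^2)⁻¹ • (p • w) with hqdef
    have hkey : ∀ r : EuclideanSpace ℝ (Fin 3),
        p*‖r-w‖^2 + ‖r‖^2*u^2 = (p+u^2)*‖r - q‖^2 + (p*u^2/(p+u^2))*‖w‖^2 := by
      intro r
      have h := key_ident_s19 p (u^2) h0.ne' (r - w) r
      rw [sub_sub_cancel] at h
      have h3 : p • (r-w) + (u^2) • r = (p+u^2) • r - p • w := by module
      rw [h3] at h
      have h4 : (p+u^2)⁻¹ • ((p+u^2) • r - p • w) = r - q := by
        rw [smul_sub, smul_smul, inv_mul_cancel₀ h0.ne', one_smul, hqdef]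
      rw [h4] at h
      linarith [h]
    have hptwise : (fun r : EuclideanSpace ℝ (Fin 3) =>
          ENNReal.ofReal ((2/Real.sqrt π) * Real.exp (-(p*‖r-w‖^2 + ‖r‖^2*u^2))))
        = fun r => ENNReal.ofReal (((2/Real.sqrt π) * Real.exp (-(p*u^2/(p+u^2))*‖w‖^2))
            * Real.exp (-(p+u^2)*‖r - q‖^2)) := by
      funext r; congr 1; rw [hkey r, neg_add, Real.exp_add]; ring
    rw [hptwise]
    have hig : Integrable (fun r : EuclideanSpace ℝ (Fin 3) =>
        ((2/Real.sqrt π) * Real.exp (-(p*u^2/(p+u^2))*‖w‖^2)) * Real.exp (-(p+u^2)*‖r - q‖^2)) := by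
      have := (gauss_integrable h0).comp_sub_right q
      exact this.const_mul _
    rw [← ofReal_integral_eq_lintegral_ofReal hig (Filter.Eventually.of_forall fun r => by positivity)]
    congr 1
    rw [integral_const_mul,
      integral_sub_right_eq_self (fun r : EuclideanSpace ℝ (Fin 3) => Real.exp (-(p+u^2)*‖r‖^2)) q,
      GaussianFourier.integral_rexp_neg_mul_sq_norm h0, finrank_euclideanSpace_fin]
    norm_num
    ring
  simp_rw [hD]
  -- step E : substitution u ↦ u / sqrt (p+u²)
  set F : ℝ → ℝ := fun t => (2*π/p) * Real.exp (-(p*‖w‖^2)*t^2) with hFdef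
  have hFc : Continuous F := by fun_prop
  have hderiv : ∀ x ∈ Ioi (0:ℝ), HasDerivWithinAt (fun u : ℝ => u / Real.sqrt (p+u^2))
      (p/((p+x^2)*Real.sqrt (p+x^2))) (Ioi 0) x :=
    fun x _ => (g_hasDeriv hp x).hasDerivWithinAt
  have hinj : InjOn (fun u : ℝ => u / Real.sqrt (p+u^2)) (Ioi 0) := (g_strictMono hp).injective.injOn
  have hCOV := integral_image_eq_integral_abs_deriv_smul measurableSet_Ioi hderiv hinj F
  rw [g_image hp] at hCOV
  have hFint : IntegrableOn F (Ioo (0:ℝ) 1) := hFc.integrableOn_Icc.mono_set Ioo_subset_Icc_self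
  have hHint : IntegrableOn
      (fun x => |p/((p+x^2)*Real.sqrt (p+x^2))| • F (x / Real.sqrt (p+x^2))) (Ioi 0) := by
    have := (integrableOn_image_iff_integrableOn_abs_deriv_smul measurableSet_Ioi hderiv hinj F).mp
    rw [g_image hp] at this
    exact this hFint
  have hHeq : ∀ u : ℝ, (2/Real.sqrt π) * (π/(p+u^2))^((3:ℝ)/2) * Real.exp (-(p*u^2/(p+u^2))*‖w‖^2)
      = |p/((p+u^2)*Real.sqrt (p+u^2))| • F (u / Real.sqrt (p+u^2)) := by
    intro u; rw [hFdef]; exact H_eq hp u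
  simp_rw [hHeq]
  rw [← ofReal_integral_eq_lintegral_ofReal hHint
    (Filter.Eventually.of_forall fun u => by positivity)]
  rw [← hCOV, ENNReal.toReal_ofReal]
  · rw [hFdef, integral_const_mul, intervalIntegral.integral_of_le zero_le_one,
      integral_Ioc_eq_integral_Ioo]
  · exact setIntegral_nonneg measurableSet_Ioo fun t _ => by rw [hFdef]; positivity

theorem boys_coulomb_integral (a b : ℝ) (ha : 0 < a) (hb : 0 < b)
    (A B C : EuclideanSpace ℝ (Fin 3)) :
    ∫ r : EuclideanSpace ℝ (Fin 3),
        Real.exp (-a * ‖r - A‖ ^ 2) * Real.exp (-b * ‖r - B‖ ^ 2) / ‖r - C‖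
      = (2 * Real.pi / (a + b))
          * Real.exp (-(a * b / (a + b)) * ‖A - B‖ ^ 2)
          * ∫ t in (0 : ℝ)..1,
              Real.exp (-((a + b) * ‖C - (a + b)⁻¹ • (a • A + b • B)‖ ^ 2) * t ^ 2) := by
  have hp : 0 < a + b := by linarith
  set P : EuclideanSpace ℝ (Fin 3) := (a+b)⁻¹ • (a • A + b • B) with hPdef
  have hpt : ∀ r : EuclideanSpace ℝ (Fin 3),
      Real.exp (-a * ‖r - A‖ ^ 2) * Real.exp (-b * ‖r - B‖ ^ 2) / ‖r - C‖
        = Real.exp (-(a*b/(a+b)) * ‖A-B‖^2) * (Real.exp (-(a+b) * ‖r-P‖^2) / ‖r-C‖) := by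
    intro r
    have h := key_ident_s19 a b hp.ne' (r-A) (r-B)
    have h1 : (r-B) - (r-A) = A - B := by abel
    rw [h1] at h
    have h3 : a • (r-A) + b • (r-B) = (a+b) • r - (a • A + b • B) := by module
    rw [h3] at h
    have h4 : (a+b)⁻¹ • ((a+b) • r - (a • A + b • B)) = r - P := by
      rw [smul_sub, smul_smul, inv_mul_cancel₀ hp.ne', one_smul, hPdef]
    rw [h4] at h
    rw [← Real.exp_add,
      show -a * ‖r-A‖^2 + -b * ‖r-B‖^2
        = -((a*b/(a+b)) * ‖A-B‖^2) + -((a+b) * ‖r-P‖^2) by linarith [h],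
      Real.exp_add]
    ring
  simp_rw [hpt]
  rw [integral_const_mul]
  have htr : ∫ r : EuclideanSpace ℝ (Fin 3), Real.exp (-(a+b) * ‖r-P‖^2) / ‖r-C‖
      = ∫ r : EuclideanSpace ℝ (Fin 3), Real.exp (-(a+b) * ‖r-(P-C)‖^2) / ‖r‖ := by
    rw [← integral_sub_right_eq_self
      (fun r : EuclideanSpace ℝ (Fin 3) => Real.exp (-(a+b) * ‖r-(P-C)‖^2) / ‖r‖) C]
    congr 1
    funext r
    rw [show r - C - (P - C) = r - P by abel]
  rw [htr, coulomb_gaussian hp (P - C), show ‖P - C‖ = ‖C - P‖ from norm_sub_rev _ _]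
  ring
end
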